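/- arXiv:2102.08855 — 2 statements merged into one kernel-verified Lean document; each statement's English description precedes it below -/
import Mathlib

section
/- Suppose X is a real symmetric matrix such that the block matrix [[−AᵀX − XA, Cᵀ − XB],[C − BᵀX, D + Dᵀ]] factors as [[Mᵀ],[Nᵀ]]·[M, N] for some real matrices M, N. Then along any solution of ẋ = Ax + Bu, y = Cx + Du, one has (1/2)x(t0)ᵀXx(t0) − (1/2)x(t1)ᵀXx(t1) = −∫_{t0}^{t1} u(t)ᵀy(t) dt + (1/2)∫_{t0}^{t1} ‖Mx(t) + Nu(t)‖² dt. -/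
open MeasureTheory Matrix

lemma transp_dot {p q : ℕ} (P : Matrix (Fin q) (Fin p) ℝ) (a : Fin p → ℝ) (b : Fin q → ℝ) :
    a ⬝ᵥ Pᵀ *ᵥ b = (P *ᵥ a) ⬝ᵥ b := by
  rw [dotProduct_mulVec, vecMul_transpose]

lemma cont_dot {p : ℕ} {f g : ℝ → Fin p → ℝ} (hf : Continuous f) (hg : Continuous g) :
    Continuous fun t => f t ⬝ᵥ g t := by
  simp only [dotProduct]
  exact continuous_finset_sum _ fun i _ =>
    ((continuous_apply i).comp hf).mul ((continuous_apply i).comp hg)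

lemma cont_mulVec {p q : ℕ} (P : Matrix (Fin p) (Fin q) ℝ) {f : ℝ → Fin q → ℝ}
    (hf : Continuous f) : Continuous fun t => P *ᵥ f t := by
  refine continuous_pi fun i => ?_
  simp only [mulVec, dotProduct]
  exact continuous_finset_sum _ fun j _ =>
    continuous_const.mul ((continuous_apply j).comp hf)

lemma quad_deriv {n : ℕ} (X : Matrix (Fin n) (Fin n) ℝ) {x : ℝ → Fin n → ℝ}
    {x' : Fin n → ℝ} {t : ℝ} (hx : HasDerivAt x x' t) :
    HasDerivAt (fun s => x s ⬝ᵥ X *ᵥ x s) (x' ⬝ᵥ X *ᵥ x t + x t ⬝ᵥ X *ᵥ x') t := by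
  have hc : ∀ i, HasDerivAt (fun s => x s i) (x' i) t := fun i => hasDerivAt_pi.mp hx i
  have h1 : HasDerivAt (fun s => ∑ i, ∑ j, x s i * (X i j * x s j))
      (∑ i, ∑ j, (x' i * (X i j * x t j) + x t i * (X i j * x' j))) t := by
    refine HasDerivAt.fun_sum fun i _ => HasDerivAt.fun_sum fun j _ => ?_
    exact (hc i).mul ((hc j).const_mul (X i j))
  have e1 : (fun s => x s ⬝ᵥ X *ᵥ x s) = fun s => ∑ i, ∑ j, x s i * (X i j * x s j) := by
    funext s
    simp [dotProduct, mulVec, Finset.mul_sum]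
  rw [e1]
  convert h1 using 1
  simp only [Finset.sum_add_distrib]
  congr 1
  · simp [dotProduct, mulVec, Finset.mul_sum]
  · simp [dotProduct, mulVec, Finset.mul_sum]

lemma key_alg {n m k : ℕ}
    (A : Matrix (Fin n) (Fin n) ℝ) (B : Matrix (Fin n) (Fin m) ℝ)
    (C : Matrix (Fin m) (Fin n) ℝ) (D : Matrix (Fin m) (Fin m) ℝ)
    (X : Matrix (Fin n) (Fin n) ℝ) (hX : X.IsSymm)
    (M : Matrix (Fin k) (Fin n) ℝ) (N : Matrix (Fin k) (Fin m) ℝ)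
    (hMM : -(Aᵀ * X) - X * A = Mᵀ * M)
    (hMN : Cᵀ - X * B = Mᵀ * N)
    (hNN : D + Dᵀ = Nᵀ * N)
    (v : Fin n → ℝ) (w : Fin m → ℝ) :
    (A *ᵥ v + B *ᵥ w) ⬝ᵥ X *ᵥ v + v ⬝ᵥ X *ᵥ (A *ᵥ v + B *ᵥ w)
      = 2 * (w ⬝ᵥ (C *ᵥ v + D *ᵥ w)) - (M *ᵥ v + N *ᵥ w) ⬝ᵥ (M *ᵥ v + N *ᵥ w) := by
  have hXs : ∀ a b : Fin n → ℝ, a ⬝ᵥ X *ᵥ b = (X *ᵥ a) ⬝ᵥ b := by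
    intro a b
    rw [← hX, transp_dot, hX]
  have F1 : (M *ᵥ v) ⬝ᵥ (M *ᵥ v) = -(2 * ((A *ᵥ v) ⬝ᵥ (X *ᵥ v))) := by
    have : v ⬝ᵥ (Mᵀ * M) *ᵥ v = v ⬝ᵥ (-(Aᵀ * X) - X * A) *ᵥ v := by rw [hMM]
    rw [← mulVec_mulVec, transp_dot] at this
    rw [this, sub_mulVec, neg_mulVec, ← mulVec_mulVec, ← mulVec_mulVec,
      dotProduct_sub, dotProduct_neg, transp_dot, hXs, dotProduct_comm]
    ring
  have F2 : (M *ᵥ v) ⬝ᵥ (N *ᵥ w) = w ⬝ᵥ (C *ᵥ v) - (B *ᵥ w) ⬝ᵥ (X *ᵥ v) := by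
    have : v ⬝ᵥ (Mᵀ * N) *ᵥ w = v ⬝ᵥ (Cᵀ - X * B) *ᵥ w := by rw [hMN]
    rw [← mulVec_mulVec, transp_dot] at this
    rw [this, sub_mulVec, ← mulVec_mulVec, dotProduct_sub, transp_dot, hXs,
      dotProduct_comm (C *ᵥ v) w, dotProduct_comm (X *ᵥ v) (B *ᵥ w)]
  have F3 : (N *ᵥ w) ⬝ᵥ (N *ᵥ w) = 2 * (w ⬝ᵥ (D *ᵥ w)) := by
    have : w ⬝ᵥ (Nᵀ * N) *ᵥ w = w ⬝ᵥ (D + Dᵀ) *ᵥ w := by rw [hNN]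
    rw [← mulVec_mulVec, transp_dot] at this
    rw [this, add_mulVec, dotProduct_add, transp_dot, dotProduct_comm (D *ᵥ w) w]
    ring
  have hXv : v ⬝ᵥ X *ᵥ (A *ᵥ v + B *ᵥ w) = (X *ᵥ v) ⬝ᵥ (A *ᵥ v + B *ᵥ w) := hXs _ _
  simp only [add_dotProduct, dotProduct_add, hXv] at *
  rw [dotProduct_comm (N *ᵥ w) (M *ᵥ v)] at *
  rw [dotProduct_comm (X *ᵥ v) (A *ᵥ v), dotProduct_comm (X *ᵥ v) (B *ᵥ w)]
  linarith [F1, F2, F3]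

/-- If the LMI matrix factors via `M, N`, then the integral dissipation identity holds
along all solutions of `ẋ = Ax + Bu`, `y = Cx + Du`. -/
theorem dissipation_rate_identity {n m k : ℕ}
    (A : Matrix (Fin n) (Fin n) ℝ) (B : Matrix (Fin n) (Fin m) ℝ)
    (C : Matrix (Fin m) (Fin n) ℝ) (D : Matrix (Fin m) (Fin m) ℝ)
    (X : Matrix (Fin n) (Fin n) ℝ) (hX : X.IsSymm)
    (M : Matrix (Fin k) (Fin n) ℝ) (N : Matrix (Fin k) (Fin m) ℝ)
    (hMM : -(Aᵀ * X) - X * A = Mᵀ * M)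
    (hMN : Cᵀ - X * B = Mᵀ * N)
    (hNN : D + Dᵀ = Nᵀ * N)
    (x : ℝ → (Fin n → ℝ)) (u : ℝ → (Fin m → ℝ)) (y : ℝ → (Fin m → ℝ))
    (hu : Continuous u)
    (hx : ∀ t, HasDerivAt x (A.mulVec (x t) + B.mulVec (u t)) t)
    (hy : ∀ t, y t = C.mulVec (x t) + D.mulVec (u t)) :
    ∀ t0 t1 : ℝ, t0 ≤ t1 →
      (1 / 2) * (x t0 ⬝ᵥ X.mulVec (x t0)) - (1 / 2) * (x t1 ⬝ᵥ X.mulVec (x t1)) =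
        -(∫ t in t0..t1, u t ⬝ᵥ y t) +
          (1 / 2) * ∫ t in t0..t1,
            (M.mulVec (x t) + N.mulVec (u t)) ⬝ᵥ (M.mulVec (x t) + N.mulVec (u t)) := by
  intro t0 t1 _
  have hxc : Continuous x := by
    rw [continuous_iff_continuousAt]
    exact fun t => (hx t).continuousAt
  set Q : ℝ → ℝ := fun t => (M *ᵥ x t + N *ᵥ u t) ⬝ᵥ (M *ᵥ x t + N *ᵥ u t) with hQ
  set F : ℝ → ℝ := fun t => u t ⬝ᵥ y t - (1 / 2) * Q t with hF
  have hQc : Continuous Q :=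
    cont_dot ((cont_mulVec M hxc).add (cont_mulVec N hu)) ((cont_mulVec M hxc).add (cont_mulVec N hu))
  have hyc : Continuous y := by
    have : Continuous fun t => C *ᵥ x t + D *ᵥ u t := (cont_mulVec C hxc).add (cont_mulVec D hu)
    convert this using 1
    funext t; exact hy t
  have huyc : Continuous fun t => u t ⬝ᵥ y t := cont_dot hu hyc
  have hFc : Continuous F := huyc.sub (continuous_const.mul hQc)
  have hderiv : ∀ t ∈ Set.uIcc t0 t1,
      HasDerivAt (fun s => (1 / 2) * (x s ⬝ᵥ X *ᵥ x s)) (F t) t := by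
    intro t _
    have h := (quad_deriv X (hx t)).const_mul (1 / 2 : ℝ)
    refine h.congr_deriv ?_
    rw [hF, hQ]
    simp only [hy t]
    rw [key_alg A B C D X hX M N hMM hMN hNN (x t) (u t)]
    ring
  have hint := intervalIntegral.integral_eq_sub_of_hasDerivAt hderiv
    (hFc.intervalIntegrable t0 t1)
  have hsplit : ∫ t in t0..t1, F t =
      (∫ t in t0..t1, u t ⬝ᵥ y t) - (1 / 2) * ∫ t in t0..t1, Q t := by
    rw [hF]
    rw [intervalIntegral.integral_sub (huyc.intervalIntegrable t0 t1)
      ((continuous_const.fun_mul hQc).intervalIntegrable t0 t1),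
      intervalIntegral.integral_const_mul]
  rw [hsplit] at hint
  linarith [hint]
end

section
/- If G(s) = D + C(sI − A)^{-1}B where A has all eigenvalues in the open left-half plane and there exists X = Xᵀ ≥ 0 with [[−AᵀX − XA, Cᵀ − XB],[C − BᵀX, D + Dᵀ]] ⪰ 0, then for every λ in the open right-half plane, G(λ) + G(λ)* ⪰ 0 (G is positive-real). -/
open Matrix
open scoped ComplexOrder

/-- Mapping a real PSD matrix to ℂ entrywise preserves positive semidefiniteness. -/
lemma psd_map_ofReal {k : Type*} [Fintype k] [DecidableEq k] {M : Matrix k k ℝ}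
    (hM : M.PosSemidef) : (M.map Complex.ofReal).PosSemidef := by
  obtain ⟨r, v, hv⟩ := Matrix.posSemidef_iff_eq_sum_vecMulVec.mp hM
  refine Matrix.posSemidef_iff_eq_sum_vecMulVec.mpr ⟨r, fun i j => (v i j : ℂ), ?_⟩
  subst hv
  ext a b
  simp [Matrix.vecMulVec_apply, Matrix.sum_apply]

lemma conjTranspose_map_ofReal {k p : Type*} (M : Matrix k p ℝ) :
    (M.map Complex.ofReal)ᴴ = Mᵀ.map Complex.ofReal := by
  ext i j
  simp [Matrix.conjTranspose_apply, Complex.conj_ofReal]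

/-- Positive-real lemma direction: if `A` is Hurwitz and there exists `X = Xᵀ ⪰ 0` with
the LMI block matrix PSD, then `G(λ) = D + C(λI − A)⁻¹B` satisfies
`G(λ) + G(λ)* ⪰ 0` for all `λ` in the open right-half plane. -/
theorem lmi_implies_positive_real {n m : ℕ}
    (A : Matrix (Fin n) (Fin n) ℝ) (B : Matrix (Fin n) (Fin m) ℝ)
    (C : Matrix (Fin m) (Fin n) ℝ) (D : Matrix (Fin m) (Fin m) ℝ)
    (hHurwitz : ∀ μ ∈ spectrum ℂ (A.map Complex.ofReal), μ.re < 0)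
    (X : Matrix (Fin n) (Fin n) ℝ) (hXsymm : X.IsSymm) (hXpsd : X.PosSemidef)
    (hLMI : (fromBlocks (-(Aᵀ * X) - X * A) (Cᵀ - X * B) (C - Bᵀ * X) (D + Dᵀ)).PosSemidef) :
    ∀ l : ℂ, 0 < l.re →
      ((D.map Complex.ofReal +
          C.map Complex.ofReal * (l • (1 : Matrix (Fin n) (Fin n) ℂ) - A.map Complex.ofReal)⁻¹ *
            B.map Complex.ofReal) +
        (D.map Complex.ofReal +
          C.map Complex.ofReal * (l • (1 : Matrix (Fin n) (Fin n) ℂ) - A.map Complex.ofReal)⁻¹ *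
            B.map Complex.ofReal)ᴴ).PosSemidef := by
  intro l hl
  set Ac : Matrix (Fin n) (Fin n) ℂ := A.map Complex.ofReal with hAc
  set Bc : Matrix (Fin n) (Fin m) ℂ := B.map Complex.ofReal with hBc
  set Cc : Matrix (Fin m) (Fin n) ℂ := C.map Complex.ofReal with hCc
  set Dc : Matrix (Fin m) (Fin m) ℂ := D.map Complex.ofReal with hDc
  set Xc : Matrix (Fin n) (Fin n) ℂ := X.map Complex.ofReal with hXc
  set Mc : Matrix (Fin n) (Fin n) ℂ := l • (1 : Matrix (Fin n) (Fin n) ℂ) - Ac with hMc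
  -- invertibility of Mc
  have hlnot : l ∉ spectrum ℂ Ac := fun h => absurd (hHurwitz l h) (by linarith)
  have hunit : IsUnit Mc := by
    rw [spectrum.mem_iff, not_not] at hlnot
    rwa [Algebra.algebraMap_eq_smul_one] at hlnot
  have hdet : IsUnit Mc.det := (Matrix.isUnit_iff_isUnit_det Mc).mp hunit
  have hMM : Mc * Mc⁻¹ = 1 := Matrix.mul_nonsing_inv Mc hdet
  set Φ : Matrix (Fin n) (Fin m) ℂ := Mc⁻¹ * Bc with hΦ
  have hMcΦ : Mc * Φ = Bc := by rw [hΦ, ← Matrix.mul_assoc, hMM, Matrix.one_mul]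
  have hΦMc : Φᴴ * Mcᴴ = Bcᴴ := by rw [← Matrix.conjTranspose_mul, hMcΦ]
  -- complexified LMI matrix
  set c : ℂ := l + (starRingEnd ℂ) l with hc
  have hXcH : Xcᴴ = Xc := by
    rw [hXc, conjTranspose_map_ofReal, hXsymm]
  have hMcH : Mcᴴ = (starRingEnd ℂ) l • (1 : Matrix (Fin n) (Fin n) ℂ) - Aᵀ.map Complex.ofReal := by
    rw [hMc, Matrix.conjTranspose_sub, Matrix.conjTranspose_smul, Matrix.conjTranspose_one,
      conjTranspose_map_ofReal]
    rfl
  have hL11 : (-(Aᵀ * X) - X * A).map Complex.ofReal = Mcᴴ * Xc + Xc * Mc - c • Xc := by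
    rw [hMcH, hMc]
    rw [Matrix.sub_mul, Matrix.mul_sub, Matrix.smul_mul, Matrix.mul_smul, Matrix.one_mul,
      Matrix.mul_one]
    have h1 : (-(Aᵀ * X) - X * A).map Complex.ofReal
        = -((Aᵀ.map Complex.ofReal) * Xc) - Xc * Ac := by
      ext i j
      simp [Matrix.map_apply, Matrix.sub_apply, Matrix.neg_apply, Matrix.mul_apply,
        hXc, hAc, Matrix.map_apply]
    rw [h1, hc]
    module
  have hL12 : (Cᵀ - X * B).map Complex.ofReal = Ccᴴ - Xc * Bc := by
    rw [hCc, conjTranspose_map_ofReal]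
    ext i j
    simp [Matrix.map_apply, Matrix.sub_apply, Matrix.mul_apply, hXc, hBc]
  have hL21 : (C - Bᵀ * X).map Complex.ofReal = Cc - Bcᴴ * Xc := by
    rw [hBc, conjTranspose_map_ofReal]
    ext i j
    simp [Matrix.map_apply, Matrix.sub_apply, Matrix.mul_apply, hXc, hCc]
  have hL22 : (D + Dᵀ).map Complex.ofReal = Dc + Dcᴴ := by
    rw [hDc, conjTranspose_map_ofReal]
    ext i j
    simp [Matrix.map_apply, Matrix.add_apply]
  have hLc : ((fromBlocks (-(Aᵀ * X) - X * A) (Cᵀ - X * B) (C - Bᵀ * X) (D + Dᵀ)).map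
      Complex.ofReal) = fromBlocks (Mcᴴ * Xc + Xc * Mc - c • Xc) (Ccᴴ - Xc * Bc)
        (Cc - Bcᴴ * Xc) (Dc + Dcᴴ) := by
    rw [Matrix.fromBlocks_map, hL11, hL12, hL21, hL22]
  have hLcPSD : (fromBlocks (Mcᴴ * Xc + Xc * Mc - c • Xc) (Ccᴴ - Xc * Bc)
      (Cc - Bcᴴ * Xc) (Dc + Dcᴴ)).PosSemidef := hLc ▸ psd_map_ofReal hLMI
  -- congruence with K = fromRows Φ 1
  set K : Matrix (Fin n ⊕ Fin m) (Fin m) ℂ := fromRows Φ (1 : Matrix (Fin m) (Fin m) ℂ) with hK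
  have hKH : Kᴴ = fromCols Φᴴ (1 : Matrix (Fin m) (Fin m) ℂ) := by
    rw [hK, Matrix.conjTranspose_fromRows_eq_fromCols_conjTranspose, Matrix.conjTranspose_one]
  have hPSD1 : (Kᴴ * fromBlocks (Mcᴴ * Xc + Xc * Mc - c • Xc) (Ccᴴ - Xc * Bc)
      (Cc - Bcᴴ * Xc) (Dc + Dcᴴ) * K).PosSemidef := hLcPSD.conjTranspose_mul_mul_same K
  have hcXc : (c • Xc).PosSemidef := by
    have hc2 : c = ((2 * l.re : ℝ) : ℂ) := by
      rw [hc, Complex.add_conj]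
    refine Matrix.PosSemidef.of_dotProduct_mulVec_nonneg ?_ ?_
    · show (c • Xc)ᴴ = c • Xc
      rw [Matrix.conjTranspose_smul, hXcH, hc2]
      simp [Complex.conj_ofReal]
    · intro x
      have hx := (psd_map_ofReal hXpsd).dotProduct_mulVec_nonneg x
      rw [Matrix.smul_mulVec, dotProduct_smul, hc2]
      rw [← hXc] at hx
      have hcpos : (0 : ℂ) ≤ ((2 * l.re : ℝ) : ℂ) := by
        rw [Complex.zero_le_real]; positivity
      exact mul_nonneg hcpos hx
  have hPSD2 : (Φᴴ * (c • Xc) * Φ).PosSemidef := hcXc.conjTranspose_mul_mul_same Φ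
  -- the key algebraic identity
  have hEq : (Dc + Cc * Mc⁻¹ * Bc) + (Dc + Cc * Mc⁻¹ * Bc)ᴴ =
      Kᴴ * fromBlocks (Mcᴴ * Xc + Xc * Mc - c • Xc) (Ccᴴ - Xc * Bc)
        (Cc - Bcᴴ * Xc) (Dc + Dcᴴ) * K + Φᴴ * (c • Xc) * Φ := by
    have hGH : (Dc + Cc * Mc⁻¹ * Bc)ᴴ = Dcᴴ + Φᴴ * Ccᴴ := by
      rw [Matrix.conjTranspose_add, Matrix.conjTranspose_mul, Matrix.conjTranspose_mul, hΦ,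
        Matrix.conjTranspose_mul, Matrix.mul_assoc]
    have hCΦ : Cc * Mc⁻¹ * Bc = Cc * Φ := by rw [hΦ, Matrix.mul_assoc]
    rw [hKH, hK, Matrix.fromCols_mul_fromBlocks, Matrix.fromCols_mul_fromRows, hGH, hCΦ]
    simp only [Matrix.one_mul, Matrix.mul_one, Matrix.mul_sub, Matrix.sub_mul, Matrix.mul_add,
      Matrix.add_mul, Matrix.mul_smul, Matrix.smul_mul, Matrix.mul_assoc, hMcΦ]
    have h1 : Φᴴ * (Mcᴴ * (Xc * Φ)) = Bcᴴ * (Xc * Φ) := by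
      rw [← Matrix.mul_assoc, hΦMc]
    rw [h1]
    abel
  rw [hEq]
  exact hPSD1.add hPSD2
end
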